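/- Let n ≥ 1, let Z : ℝⁿ → ℝⁿ be a C^∞ vector field, and let φ : ℝ × ℝⁿ → ℝⁿ be a C^∞ map satisfying φ(0,x) = x, φ(t+s,x) = φ(t, φ(s,x)), and ∂φ/∂t (t,x) = Z(φ(t,x)) for all t, s ∈ ℝ and x ∈ ℝⁿ (a global flow of Z). Suppose there are constants K ≥ 0 and C ≥ 0 such that |div(Z)(x)| ≤ K·‖Z(x)‖ for every x ∈ ℝⁿ, and let S ⊆ ℝⁿ be a Lebesgue-measurable set such that ∫₀ᵗ ‖Z(φ(s,z))‖ ds ≤ C for every z ∈ S and every t ≥ 0. Then for every t ≥ 0 the Lebesgue measure of the image φ_t(S) := {φ(t,z) : z ∈ S} satisfies vol(φ_t(S)) ≥ e^{−K·C}·vol(S). -/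

import Mathlib

open MeasureTheory Matrix

section Aux

variable {n : ℕ}

/-- The determinant, as a continuous multilinear map in the rows. -/
noncomputable def detCM (n : ℕ) :
    ContinuousMultilinearMap ℝ (fun _ : Fin n => (Fin n → ℝ)) ℝ :=
  MultilinearMap.mkContinuous
    (Matrix.detRowAlternating : (Fin n → ℝ) [⋀^Fin n]→ₗ[ℝ] ℝ).toMultilinearMap
    ((n.factorial : ℕ) : ℝ) (by
      intro m
      have h1 : ((Matrix.detRowAlternating :
          (Fin n → ℝ) [⋀^Fin n]→ₗ[ℝ] ℝ).toMultilinearMap m : ℝ)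
          = Matrix.det (Matrix.of m) := rfl
      rw [h1, Real.norm_eq_abs, Matrix.det_apply]
      calc |∑ σ : Equiv.Perm (Fin n), Equiv.Perm.sign σ • ∏ i, Matrix.of m (σ i) i|
          ≤ ∑ σ : Equiv.Perm (Fin n), |Equiv.Perm.sign σ • ∏ i, Matrix.of m (σ i) i| :=
            Finset.abs_sum_le_sum_abs _ _
        _ ≤ ∑ _σ : Equiv.Perm (Fin n), ∏ i, ‖m i‖ := by
            refine Finset.sum_le_sum fun σ _ => ?_
            have hs : |Equiv.Perm.sign σ • ∏ i, Matrix.of m (σ i) i|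
                = |∏ i, m (σ i) i| := by
              rcases Int.units_eq_one_or (Equiv.Perm.sign σ) with h | h <;>
                simp [h, Units.smul_def]
            rw [hs, Finset.abs_prod]
            calc ∏ i, |m (σ i) i| ≤ ∏ i, ‖m (σ i)‖ :=
                  Finset.prod_le_prod (fun i _ => abs_nonneg _)
                    (fun i _ => by simpa using norm_le_pi_norm (m (σ i)) i)
              _ = ∏ i, ‖m i‖ := Equiv.prod_comp σ fun i => ‖m i‖
        _ = ((n.factorial : ℕ) : ℝ) * ∏ i, ‖m i‖ := by
            rw [Finset.sum_const, Finset.card_univ, Fintype.card_perm, Fintype.card_fin,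
              nsmul_eq_mul])

theorem hasDerivAt_matrix_det {m : ℝ → (Fin n → Fin n → ℝ)} {m' : Fin n → Fin n → ℝ} {t : ℝ}
    (hm : HasDerivAt m m' t) :
    HasDerivAt (fun τ => Matrix.det (Matrix.of (m τ)))
      (∑ i, Matrix.det ((Matrix.of (m t)).updateRow i (m' i))) t := by
  classical
  have hm' : HasFDerivAt m ((1 : ℝ →L[ℝ] ℝ).smulRight m') t := hm.hasFDerivAt
  have h := ((detCM n).hasFDerivAt (m t)).comp t hm'
  have h2 := h.hasDerivAt
  have hval : (((detCM n).linearDeriv (m t)).comp ((1 : ℝ →L[ℝ] ℝ).smulRight m')) 1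
      = ∑ i, Matrix.det ((Matrix.of (m t)).updateRow i (m' i)) := by
    rw [ContinuousLinearMap.comp_apply, ContinuousLinearMap.smulRight_apply,
      ContinuousLinearMap.one_apply, one_smul, ContinuousMultilinearMap.linearDeriv_apply]
    rfl
  rw [← hval]
  exact h2

theorem sum_det_updateRow_mul (A B : Matrix (Fin n) (Fin n) ℝ) :
    ∑ i, ((A.updateRow i ((B * A) i)).det) = B.trace * A.det := by
  have hrow : ∀ i, (B * A) i = ∑ k, B i k • A k := by
    intro i; funext j
    simp [Matrix.mul_apply, Finset.sum_apply]
  calc ∑ i, ((A.updateRow i ((B * A) i)).det)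
      = ∑ i, B i i • A.det := by
        refine Finset.sum_congr rfl fun i _ => ?_
        rw [hrow i, Matrix.det_updateRow_sum]
    _ = B.trace * A.det := by
        simp [Matrix.trace, Matrix.diag, Finset.sum_mul, smul_eq_mul]

end Aux

/-- The divergence of a vector field `Z : ℝⁿ → ℝⁿ` at `x`: the trace of its Jacobian. -/
noncomputable def divergence {n : ℕ} (Z : EuclideanSpace ℝ (Fin n) → EuclideanSpace ℝ (Fin n))
    (x : EuclideanSpace ℝ (Fin n)) : ℝ :=
  LinearMap.trace ℝ (EuclideanSpace ℝ (Fin n)) (fderiv ℝ Z x).toLinearMap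

set_option maxHeartbeats 2000000

/-- let `Z` be a smooth vector field on `ℝⁿ` with global flow `φ`, such that
`|div Z| ≤ K ‖Z‖` everywhere, and let `S` be a measurable set along which the time-integral of
`‖Z‖` along the flow is bounded by `C` for all nonnegative times. Then for every `t ≥ 0`,
`vol(φ_t(S)) ≥ e^{−K·C} vol(S)`. -/
theorem volume_flow_lower_bound {n : ℕ} (hn : 1 ≤ n)
    (Z : EuclideanSpace ℝ (Fin n) → EuclideanSpace ℝ (Fin n)) (hZ : ContDiff ℝ (⊤ : ℕ∞) Z)
    (φ : ℝ → EuclideanSpace ℝ (Fin n) → EuclideanSpace ℝ (Fin n))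
    (hφ_smooth : ContDiff ℝ (⊤ : ℕ∞) (fun p : ℝ × EuclideanSpace ℝ (Fin n) => φ p.1 p.2))
    (hφ_zero : ∀ x, φ 0 x = x)
    (hφ_add : ∀ t s x, φ (t + s) x = φ t (φ s x))
    (hφ_deriv : ∀ t x, HasDerivAt (fun τ => φ τ x) (Z (φ t x)) t)
    (K C : ℝ) (hK : 0 ≤ K) (hC : 0 ≤ C)
    (hdiv : ∀ x, |divergence Z x| ≤ K * ‖Z x‖)
    (S : Set (EuclideanSpace ℝ (Fin n))) (hS : MeasurableSet S)
    (hint : ∀ z ∈ S, ∀ t : ℝ, 0 ≤ t → (∫ s in (0:ℝ)..t, ‖Z (φ s z)‖) ≤ C) :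
    ∀ t : ℝ, 0 ≤ t →
      ENNReal.ofReal (Real.exp (-(K * C))) * MeasureTheory.volume S ≤
        MeasureTheory.volume (φ t '' S) := by
  classical
  intro t ht
  set ψ : ℝ × EuclideanSpace ℝ (Fin n) → EuclideanSpace ℝ (Fin n) :=
    fun p => φ p.1 p.2 with hψdef
  have hψd : Differentiable ℝ ψ := hφ_smooth.differentiable (by simp)
  set F := fderiv ℝ ψ with hFdef
  have hψd' : ∀ p, HasFDerivAt ψ (F p) p := fun p => (hψd p).hasFDerivAt
  have hFd : Differentiable ℝ F :=
    ((contDiff_infty_iff_fderiv.mp hφ_smooth).2).differentiable (by simp)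
  have hZd : ∀ y, HasFDerivAt Z (fderiv ℝ Z y) y :=
    fun y => (hZ.differentiable (by simp) y).hasFDerivAt
  set M : EuclideanSpace ℝ (Fin n) → ℝ →
      (EuclideanSpace ℝ (Fin n) →L[ℝ] EuclideanSpace ℝ (Fin n)) :=
    fun z τ => (F (τ, z)).comp (ContinuousLinearMap.inr ℝ ℝ (EuclideanSpace ℝ (Fin n)))
    with hMdef
  -- (a)
  have hMφ : ∀ (τ : ℝ) z, HasFDerivAt (φ τ) (M z τ) z := by
    intro τ z
    exact (hψd' (τ, z)).comp z (hasFDerivAt_prodMk_right τ z)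
  -- (b)
  have hFZ : ∀ (τ : ℝ) x, F (τ, x) (1, 0) = Z (φ τ x) := by
    intro τ x
    have h1 : HasDerivAt (fun τ' : ℝ => ((τ' : ℝ), x))
        ((1:ℝ), (0 : EuclideanSpace ℝ (Fin n))) τ :=
      HasDerivAt.prodMk (hasDerivAt_id τ) (hasDerivAt_const τ x)
    have h2 := (hψd' (τ, x)).comp_hasDerivAt τ h1
    have h2' : HasDerivAt (fun τ' => φ τ' x) (F (τ, x) (1, 0)) τ := h2
    exact h2'.unique (hφ_deriv τ x)
  -- (c)
  have hM' : ∀ z (τ : ℝ),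
      HasDerivAt (M z) ((fderiv ℝ Z (φ τ z)).comp (M z τ)) τ := by
    intro z τ
    have hG : HasFDerivAt F (fderiv ℝ F (τ, z)) (τ, z) := (hFd _).hasFDerivAt
    set G := fderiv ℝ F (τ, z) with hGdef
    have h1 : HasDerivAt (fun τ' : ℝ => F (τ', z)) (G (1, 0)) τ :=
      hG.comp_hasDerivAt τ (HasDerivAt.prodMk (hasDerivAt_id τ) (hasDerivAt_const τ z))
    have h2 : HasDerivAt (M z)
        ((G (1, 0)).comp (ContinuousLinearMap.inr ℝ ℝ (EuclideanSpace ℝ (Fin n)))) τ := by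
      have := (((ContinuousLinearMap.compL ℝ (EuclideanSpace ℝ (Fin n))
        (ℝ × EuclideanSpace ℝ (Fin n)) (EuclideanSpace ℝ (Fin n))).flip
        (ContinuousLinearMap.inr ℝ ℝ (EuclideanSpace ℝ (Fin n)))).hasFDerivAt
        (x := F (τ, z))).comp_hasDerivAt τ h1
      exact this
    have hkey : (fderiv ℝ Z (φ τ z)).comp (M z τ)
        = (G (1, 0)).comp (ContinuousLinearMap.inr ℝ ℝ (EuclideanSpace ℝ (Fin n))) := by
      have hW1 : HasFDerivAt (fun x => Z (φ τ x))
          ((fderiv ℝ Z (φ τ z)).comp (M z τ)) z := (hZd _).comp z (hMφ τ z)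
      have hW2 : HasFDerivAt (fun x => Z (φ τ x))
          ((ContinuousLinearMap.apply ℝ (EuclideanSpace ℝ (Fin n))
            ((1:ℝ), (0 : EuclideanSpace ℝ (Fin n)))).comp
            (G.comp (ContinuousLinearMap.inr ℝ ℝ (EuclideanSpace ℝ (Fin n))))) z := by
        have h3 : HasFDerivAt (fun x : EuclideanSpace ℝ (Fin n) => F (τ, x))
            (G.comp (ContinuousLinearMap.inr ℝ ℝ (EuclideanSpace ℝ (Fin n)))) z :=
          hG.comp z (hasFDerivAt_prodMk_right τ z)
        have h4 := ((ContinuousLinearMap.apply ℝ (EuclideanSpace ℝ (Fin n))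
          ((1:ℝ), (0 : EuclideanSpace ℝ (Fin n)))).hasFDerivAt
          (x := F (τ, z))).comp z h3
        have heq : (⇑(ContinuousLinearMap.apply ℝ (EuclideanSpace ℝ (Fin n))
            ((1:ℝ), (0 : EuclideanSpace ℝ (Fin n)))) ∘ fun x => F (τ, x))
            = fun x => Z (φ τ x) := funext fun x => hFZ τ x
        rwa [heq] at h4
      have h5 := hW1.unique hW2
      rw [h5]
      refine ContinuousLinearMap.ext fun v => ?_
      have hsym := second_derivative_symmetric hψd' hG
        ((0 : ℝ), v) ((1:ℝ), (0 : EuclideanSpace ℝ (Fin n)))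
      simp only [ContinuousLinearMap.comp_apply, ContinuousLinearMap.apply_apply,
        ContinuousLinearMap.inr_apply]
      exact hsym
    rw [hkey]
    exact h2
  -- (d)
  have hM0 : ∀ z, M z 0 = ContinuousLinearMap.id ℝ (EuclideanSpace ℝ (Fin n)) := by
    intro z
    have h2 : HasFDerivAt (φ 0) (ContinuousLinearMap.id ℝ (EuclideanSpace ℝ (Fin n))) z := by
      have hid : (φ 0) = id := funext fun x => hφ_zero x
      rw [hid]; exact hasFDerivAt_id z
    exact (hMφ 0 z).unique h2
  -- matrix transfer
  set b : Module.Basis (Fin n) ℝ (EuclideanSpace ℝ (Fin n)) :=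
    (EuclideanSpace.basisFun (Fin n) ℝ).toBasis with hbdef
  set T : (EuclideanSpace ℝ (Fin n) →L[ℝ] EuclideanSpace ℝ (Fin n)) →ₗ[ℝ]
      (Fin n → Fin n → ℝ) :=
    { toFun := fun A => LinearMap.toMatrix b b A.toLinearMap
      map_add' := fun A B => by simp [map_add]; rfl
      map_smul' := fun c A => by simp; rfl } with hTdef
  have hTcont : Continuous T := T.continuous_of_finiteDimensional
  have hmz : ∀ z (τ : ℝ), HasDerivAt (fun σ => T (M z σ))
      (T ((fderiv ℝ Z (φ τ z)).comp (M z τ))) τ :=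
    fun z τ => ((⟨T, hTcont⟩ : (EuclideanSpace ℝ (Fin n) →L[ℝ] EuclideanSpace ℝ (Fin n))
      →L[ℝ] (Fin n → Fin n → ℝ)).hasFDerivAt).comp_hasDerivAt τ (hM' z τ)
  have hg' : ∀ z (τ : ℝ), HasDerivAt (fun σ => Matrix.det (Matrix.of (T (M z σ))))
      (divergence Z (φ τ z) * Matrix.det (Matrix.of (T (M z τ)))) τ := by
    intro z τ
    have h := hasDerivAt_matrix_det (hmz z τ)
    have hcomp : (T ((fderiv ℝ Z (φ τ z)).comp (M z τ)))
        = ((LinearMap.toMatrix b b (fderiv ℝ Z (φ τ z)).toLinearMap)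
            * Matrix.of (T (M z τ)) : Matrix (Fin n) (Fin n) ℝ) := by
      show LinearMap.toMatrix b b ((fderiv ℝ Z (φ τ z)).comp (M z τ)).toLinearMap = _
      rw [ContinuousLinearMap.toLinearMap_comp, LinearMap.toMatrix_comp b b b]
      rfl
    rw [hcomp] at h
    rw [sum_det_updateRow_mul] at h
    have htrace : (LinearMap.toMatrix b b (fderiv ℝ Z (φ τ z)).toLinearMap).trace
        = divergence Z (φ τ z) := (LinearMap.trace_eq_matrix_trace ℝ b _).symm
    rwa [htrace] at h
  have hg0 : ∀ z, Matrix.det (Matrix.of (T (M z 0))) = 1 := by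
    intro z
    rw [hM0 z]
    show Matrix.det (LinearMap.toMatrix b b
      (ContinuousLinearMap.id ℝ (EuclideanSpace ℝ (Fin n))).toLinearMap) = 1
    rw [ContinuousLinearMap.coe_id, LinearMap.toMatrix_id, Matrix.det_one]
  have hφcont : ∀ z, Continuous (fun τ : ℝ => φ τ z) :=
    fun z => hψd.continuous.comp (continuous_id.prodMk continuous_const)
  have hacont : ∀ z, Continuous (fun τ : ℝ => divergence Z (φ τ z)) := by
    intro z
    have h2 : Continuous (fderiv ℝ Z) := hZ.continuous_fderiv (by simp)
    have h3 : Continuous (fun A : EuclideanSpace ℝ (Fin n) →L[ℝ] EuclideanSpace ℝ (Fin n) =>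
        LinearMap.trace ℝ (EuclideanSpace ℝ (Fin n)) A.toLinearMap) :=
      LinearMap.continuous_of_finiteDimensional
        ((LinearMap.trace ℝ (EuclideanSpace ℝ (Fin n))) ∘ₗ ContinuousLinearMap.coeLM ℝ)
    exact h3.comp (h2.comp (hφcont z))
  -- Liouville formula
  have key : ∀ z (τ₀ : ℝ), Matrix.det (Matrix.of (T (M z τ₀)))
      = Real.exp (∫ s in (0:ℝ)..τ₀, divergence Z (φ s z)) := by
    intro z τ₀
    have hA : ∀ u : ℝ, HasDerivAt (fun w : ℝ => ∫ s in (0:ℝ)..w, divergence Z (φ s z))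
        (divergence Z (φ u z)) u := fun u =>
      ((hacont z).integral_hasStrictDerivAt 0 u).hasDerivAt
    have hd : ∀ u : ℝ, HasDerivAt (fun w => Matrix.det (Matrix.of (T (M z w)))
        * Real.exp (-(∫ s in (0:ℝ)..w, divergence Z (φ s z)))) 0 u := by
      intro u
      have h1 := (hg' z u).mul (((hA u).neg).exp)
      refine h1.congr_deriv ?_
      ring
    have hconst := is_const_of_deriv_eq_zero
      (fun w => (hd w).differentiableAt) (fun w => (hd w).deriv) τ₀ 0
    rw [hg0 z, intervalIntegral.integral_same, neg_zero, Real.exp_zero, one_mul] at hconst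
    rw [Real.exp_neg, mul_inv_eq_one₀ (Real.exp_ne_zero _)] at hconst
    exact hconst
  -- determinant lower bound on S
  have hdetb : ∀ z ∈ S, Real.exp (-(K * C)) ≤ |(M z t).det| := by
    intro z hz
    have hAb : -(K * C) ≤ ∫ s in (0:ℝ)..t, divergence Z (φ s z) := by
      have habs : |∫ s in (0:ℝ)..t, divergence Z (φ s z)|
          ≤ ∫ s in (0:ℝ)..t, |divergence Z (φ s z)| :=
        intervalIntegral.abs_integral_le_integral_abs ht
      have hmono : (∫ s in (0:ℝ)..t, |divergence Z (φ s z)|)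
          ≤ ∫ s in (0:ℝ)..t, K * ‖Z (φ s z)‖ := by
        apply intervalIntegral.integral_mono_on ht
        · exact ((hacont z).abs).intervalIntegrable 0 t
        · exact (continuous_const.mul
            ((hZ.continuous.comp (hφcont z)).norm)).intervalIntegrable 0 t
        · intro s _
          exact hdiv (φ s z)
      have hKC : (∫ s in (0:ℝ)..t, K * ‖Z (φ s z)‖) ≤ K * C := by
        rw [intervalIntegral.integral_const_mul]
        exact mul_le_mul_of_nonneg_left (hint z hz t ht) hK
      linarith [neg_abs_le (∫ s in (0:ℝ)..t, divergence Z (φ s z))]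
    have hdet : (M z t).det = Matrix.det (Matrix.of (T (M z t))) := by
      show (M z t).det = Matrix.det (LinearMap.toMatrix b b (M z t).toLinearMap)
      rw [LinearMap.det_toMatrix]
    rw [hdet, key z t, abs_of_pos (Real.exp_pos _)]
    exact Real.exp_le_exp.mpr hAb
  -- conclusion via the change of variables formula
  have hinj : Set.InjOn (φ t) S := fun x _ y _ hxy => by
    have h := congrArg (φ (-t)) hxy
    rwa [← hφ_add, ← hφ_add, neg_add_cancel, hφ_zero, hφ_zero] at h
  have heq := MeasureTheory.lintegral_abs_det_fderiv_eq_addHaar_image MeasureTheory.volume hS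
    (fun x _ => (hMφ t x).hasFDerivWithinAt) hinj
  rw [← heq]
  calc ENNReal.ofReal (Real.exp (-(K * C))) * MeasureTheory.volume S
      = ∫⁻ _x in S, ENNReal.ofReal (Real.exp (-(K * C))) ∂MeasureTheory.volume :=
        (setLIntegral_const S _).symm
    _ ≤ ∫⁻ x in S, ENNReal.ofReal |(M x t).det| ∂MeasureTheory.volume :=
        setLIntegral_mono' hS fun x hx => ENNReal.ofReal_le_ofReal (hdetb x hx)
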